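/- Fix N ∈ ℕ and consider the mean-field N-DM team with expected cost J_N(γ¹,…,γ^N) = (1/N)·E[Σ_{i=1}^N c(ω₀, γ^i(v^i), (1/N)Σ_{p=1}^N γ^p(v^p))]. Assume the action set U ⊆ ℝ^n is convex, the cost c(ω₀, u, μ) is ℙ-almost surely jointly convex in (u, μ), and the observations are exchangeable conditioned on ω₀, i.e. for every permutation σ of {1,…,N} the joint law of (ω₀, v^{σ(1)},…,v^{σ(N)}) equals that of (ω₀, v¹,…,v^N). Then the team is symmetrically optimal: for every policy tuple (γ¹,…,γ^N) there exists a single policy γ̃ such that J_N(γ̃,…,γ̃) ≤ J_N(γ¹,…,γ^N). -/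

import Mathlib

open MeasureTheory Filter ENNReal

/-- The mean-field `N`-decision-maker expected cost
`J_N(γ) = (1/N) E[ Σ_i c(ω₀, γ^i(v^i), (1/N) Σ_p γ^p(v^p)) ]`,
valued in `ℝ≥0∞` (the cost `c` is `[0,∞)`-valued). -/
noncomputable def meanFieldCostTuple {Ω Ω₀ : Type*} [MeasurableSpace Ω] [MeasurableSpace Ω₀]
    (P : Measure Ω) (ω₀ : Ω → Ω₀) {N m n : ℕ}
    (v : Fin N → Ω → (Fin m → ℝ))
    (c : Ω₀ → (Fin n → ℝ) → (Fin n → ℝ) → ℝ)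
    (γ : Fin N → (Fin m → ℝ) → (Fin n → ℝ)) : ℝ≥0∞ :=
  (N : ℝ≥0∞)⁻¹ *
    ∫⁻ ω, ENNReal.ofReal (∑ i : Fin N,
      c (ω₀ ω) (γ i (v i ω)) ((N : ℝ)⁻¹ • ∑ p : Fin N, γ p (v p ω))) ∂P

theorem stmt6 {Ω Ω₀ : Type*} [MeasurableSpace Ω] [MeasurableSpace Ω₀]
    (P : Measure Ω) [IsProbabilityMeasure P]
    (ω₀ : Ω → Ω₀) (hω₀ : Measurable ω₀)
    (N m n : ℕ) (hN : 0 < N)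
    (v : Fin N → Ω → (Fin m → ℝ)) (hv : ∀ i, Measurable (v i))
    -- the action set `U` is convex
    (U : Set (Fin n → ℝ)) (hU : Convex ℝ U)
    (c : Ω₀ → (Fin n → ℝ) → (Fin n → ℝ) → ℝ)
    (hc_meas : Measurable (fun p : Ω₀ × (Fin n → ℝ) × (Fin n → ℝ) => c p.1 p.2.1 p.2.2))
    (hc_nonneg : ∀ w u μ', 0 ≤ c w u μ')
    -- `c(ω₀, u, μ)` is `ℙ`-a.s. jointly convex in `(u, μ)`
    (hconv : ∀ᵐ ω ∂P,
      ConvexOn ℝ Set.univ (fun p : (Fin n → ℝ) × (Fin n → ℝ) => c (ω₀ ω) p.1 p.2))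
    -- the observations are exchangeable conditioned on `ω₀`
    (hobs : ∀ σ : Equiv.Perm (Fin N),
      Measure.map (fun ω => (ω₀ ω, fun i => v (σ i) ω)) P =
        Measure.map (fun ω => (ω₀ ω, fun i => v i ω)) P)
    -- a given policy tuple, Borel measurable and `U`-valued
    (γ : Fin N → (Fin m → ℝ) → (Fin n → ℝ))
    (hγ_meas : ∀ i, Measurable (γ i)) (hγ_U : ∀ i x, γ i x ∈ U) :
    -- then there is a single policy performing at least as well
    ∃ γt : (Fin m → ℝ) → (Fin n → ℝ), Measurable γt ∧ (∀ x, γt x ∈ U) ∧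
      meanFieldCostTuple P ω₀ v c (fun _ => γt) ≤ meanFieldCostTuple P ω₀ v c γ := by
  classical
  haveI : NeZero N := ⟨hN.ne'⟩
  have hNR : (0:ℝ) < N := by exact_mod_cast hN
  -- the averaged (symmetric) policy
  set γt : (Fin m → ℝ) → (Fin n → ℝ) := fun x => (N:ℝ)⁻¹ • ∑ j : Fin N, γ j x with hγt_def
  have hγt_meas : Measurable γt :=
    measurable_const.fun_smul (Finset.measurable_sum Finset.univ fun j _ => hγ_meas j)
  have hw1 : ∑ _k : Fin N, (N:ℝ)⁻¹ = 1 := by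
    rw [Finset.sum_const, Finset.card_univ, Fintype.card_fin, nsmul_eq_mul,
      mul_inv_cancel₀ hNR.ne']
  have hγt_U : ∀ x, γt x ∈ U := by
    intro x
    have h := hU.sum_mem (t := Finset.univ) (w := fun _ : Fin N => (N:ℝ)⁻¹)
      (fun i _ => by positivity) hw1 (z := fun j => γ j x) (fun j _ => hγ_U j x)
    simpa [hγt_def, Finset.smul_sum] using h
  -- cost functional for a relabelled policy tuple
  set F : (Fin N → Fin N) → Ω → ℝ := fun σ ω =>
    ∑ i : Fin N, c (ω₀ ω) (γ (σ i) (v i ω))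
      ((N:ℝ)⁻¹ • ∑ p : Fin N, γ (σ p) (v p ω)) with hF_def
  have hF_nonneg : ∀ σ ω, 0 ≤ F σ ω := fun σ ω =>
    Finset.sum_nonneg fun i _ => hc_nonneg _ _ _
  have hF_meas : ∀ σ, Measurable fun ω => ENNReal.ofReal (F σ ω) := by
    intro σ
    apply Measurable.ennreal_ofReal
    apply Finset.measurable_sum
    intro i _
    exact hc_meas.comp (hω₀.prodMk (((hγ_meas _).comp (hv i)).prodMk
      (measurable_const.fun_smul (Finset.measurable_sum Finset.univ fun p _ =>
        (hγ_meas _).comp (hv p)))))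
  -- exchangeability: relabelling the policies does not change the cost
  have key_int : ∀ σ : Equiv.Perm (Fin N),
      ∫⁻ ω, ENNReal.ofReal (F σ ω) ∂P = ∫⁻ ω, ENNReal.ofReal (F id ω) ∂P := by
    intro σ
    set G : Ω₀ × (Fin N → Fin m → ℝ) → ℝ≥0∞ := fun q =>
      ENNReal.ofReal (∑ i : Fin N, c q.1 (γ i (q.2 i))
        ((N:ℝ)⁻¹ • ∑ p : Fin N, γ p (q.2 p))) with hG_def
    have hG_meas : Measurable G := by
      apply Measurable.ennreal_ofReal
      apply Finset.measurable_sum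
      intro i _
      exact hc_meas.comp (measurable_fst.prodMk
        (((hγ_meas i).comp ((measurable_pi_apply i).comp measurable_snd)).prodMk
          (measurable_const.fun_smul (Finset.measurable_sum Finset.univ fun p _ =>
            (hγ_meas p).comp ((measurable_pi_apply p).comp measurable_snd)))))
    have hT : ∀ τ : Equiv.Perm (Fin N),
        Measurable fun ω => (ω₀ ω, fun i => v (τ i) ω) :=
      fun τ => hω₀.prodMk (measurable_pi_lambda _ fun i => hv (τ i))
    have h1 : ∀ ω, ENNReal.ofReal (F (⇑σ) ω) = G (ω₀ ω, fun i => v (σ⁻¹ i) ω) := by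
      intro ω
      simp only [hG_def, hF_def]
      congr 1
      rw [← Equiv.sum_comp σ (fun j => c (ω₀ ω) (γ j (v (σ⁻¹ j) ω))
        ((N:ℝ)⁻¹ • ∑ p : Fin N, γ p (v (σ⁻¹ p) ω)))]
      refine Finset.sum_congr rfl fun i _ => ?_
      rw [← Equiv.sum_comp σ (fun p => γ p (v (σ⁻¹ p) ω))]
      simp [Equiv.Perm.inv_def]
    have h2 : ∀ ω, ENNReal.ofReal (F id ω) = G (ω₀ ω, fun i => v i ω) := by
      intro ω; simp [hG_def, hF_def]
    calc ∫⁻ ω, ENNReal.ofReal (F (⇑σ) ω) ∂P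
        = ∫⁻ ω, G (ω₀ ω, fun i => v (σ⁻¹ i) ω) ∂P := by simp_rw [h1]
      _ = ∫⁻ q, G q ∂(Measure.map (fun ω => (ω₀ ω, fun i => v (σ⁻¹ i) ω)) P) :=
          (lintegral_map hG_meas (hT σ⁻¹)).symm
      _ = ∫⁻ q, G q ∂(Measure.map (fun ω => (ω₀ ω, fun i => v i ω)) P) := by
          rw [hobs σ⁻¹]
      _ = ∫⁻ ω, G (ω₀ ω, fun i => v i ω) ∂P :=
          lintegral_map hG_meas (hω₀.prodMk (measurable_pi_lambda _ fun i => hv i))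
      _ = ∫⁻ ω, ENNReal.ofReal (F id ω) ∂P := by simp_rw [h2]
  -- pointwise convexity bound
  have hpoint : ∀ᵐ ω ∂P, ENNReal.ofReal (∑ i : Fin N,
      c (ω₀ ω) (γt (v i ω)) ((N:ℝ)⁻¹ • ∑ p : Fin N, γt (v p ω)))
      ≤ (N : ℝ≥0∞)⁻¹ * ∑ k : Fin N, ENNReal.ofReal (F (fun i => i + k) ω) := by
    filter_upwards [hconv] with ω hcω
    have per_i : ∀ i : Fin N,
        c (ω₀ ω) (γt (v i ω)) ((N:ℝ)⁻¹ • ∑ p : Fin N, γt (v p ω)) ≤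
        ∑ k : Fin N, (N:ℝ)⁻¹ *
          c (ω₀ ω) (γ (i + k) (v i ω))
            ((N:ℝ)⁻¹ • ∑ p : Fin N, γ (p + k) (v p ω)) := by
      intro i
      have hpair : (∑ k : Fin N, (N:ℝ)⁻¹ •
          ((γ (i + k) (v i ω), (N:ℝ)⁻¹ • ∑ p : Fin N, γ (p + k) (v p ω)) :
            (Fin n → ℝ) × (Fin n → ℝ))) =
          (γt (v i ω), (N:ℝ)⁻¹ • ∑ p : Fin N, γt (v p ω)) := by
        refine Prod.ext ?_ ?_
        · rw [Prod.fst_sum]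
          simp only [Prod.smul_fst]
          rw [← Finset.smul_sum]
          have : ∑ k : Fin N, γ (i + k) (v i ω) = ∑ j : Fin N, γ j (v i ω) := by
            rw [← Equiv.sum_comp (Equiv.addLeft i) (fun j => γ j (v i ω))]
            simp [Equiv.coe_addLeft]
          rw [this]
        · rw [Prod.snd_sum]
          simp only [Prod.smul_snd]
          have lhs : ∑ k : Fin N, (N:ℝ)⁻¹ • ((N:ℝ)⁻¹ • ∑ p : Fin N, γ (p + k) (v p ω))
              = (N:ℝ)⁻¹ • (N:ℝ)⁻¹ • ∑ k : Fin N, ∑ p : Fin N, γ (p + k) (v p ω) := by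
            rw [Finset.smul_sum, Finset.smul_sum]
          rw [lhs, Finset.sum_comm]
          have inner : ∀ p : Fin N, ∑ k : Fin N, γ (p + k) (v p ω)
              = ∑ j : Fin N, γ j (v p ω) := by
            intro p
            rw [← Equiv.sum_comp (Equiv.addLeft p) (fun j => γ j (v p ω))]
            simp [Equiv.coe_addLeft]
          rw [Finset.sum_congr rfl fun p _ => inner p]
          simp only [hγt_def]
          rw [Finset.smul_sum]
      have h := hcω.map_sum_le (t := Finset.univ) (w := fun _ : Fin N => (N:ℝ)⁻¹)
        (p := fun k : Fin N => (γ (i + k) (v i ω),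
          (N:ℝ)⁻¹ • ∑ p : Fin N, γ (p + k) (v p ω)))
        (fun _ _ => by positivity) hw1 (fun _ _ => Set.mem_univ _)
      rw [hpair] at h
      simpa [smul_eq_mul] using h
    have hsum : ∑ i : Fin N, c (ω₀ ω) (γt (v i ω))
          ((N:ℝ)⁻¹ • ∑ p : Fin N, γt (v p ω))
        ≤ ∑ k : Fin N, (N:ℝ)⁻¹ * F (fun i => i + k) ω := by
      calc ∑ i : Fin N, c (ω₀ ω) (γt (v i ω)) ((N:ℝ)⁻¹ • ∑ p : Fin N, γt (v p ω))
          ≤ ∑ i : Fin N, ∑ k : Fin N, (N:ℝ)⁻¹ *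
              c (ω₀ ω) (γ (i + k) (v i ω))
                ((N:ℝ)⁻¹ • ∑ p : Fin N, γ (p + k) (v p ω)) :=
            Finset.sum_le_sum fun i _ => per_i i
        _ = ∑ k : Fin N, (N:ℝ)⁻¹ * F (fun i => i + k) ω := by
            rw [Finset.sum_comm]
            exact Finset.sum_congr rfl fun k _ => by rw [hF_def, Finset.mul_sum]
    calc ENNReal.ofReal (∑ i : Fin N, c (ω₀ ω) (γt (v i ω))
          ((N:ℝ)⁻¹ • ∑ p : Fin N, γt (v p ω)))
        ≤ ENNReal.ofReal (∑ k : Fin N, (N:ℝ)⁻¹ * F (fun i => i + k) ω) :=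
          ENNReal.ofReal_le_ofReal hsum
      _ = ∑ k : Fin N, ENNReal.ofReal ((N:ℝ)⁻¹ * F (fun i => i + k) ω) :=
          ENNReal.ofReal_sum_of_nonneg fun k _ =>
            mul_nonneg (by positivity) (hF_nonneg _ ω)
      _ = (N : ℝ≥0∞)⁻¹ * ∑ k : Fin N, ENNReal.ofReal (F (fun i => i + k) ω) := by
          rw [Finset.mul_sum]
          refine Finset.sum_congr rfl fun k _ => ?_
          rw [ENNReal.ofReal_mul (by positivity), ENNReal.ofReal_inv_of_pos hNR,
            ENNReal.ofReal_natCast]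
  -- reindexing for the cyclic shifts
  have cyc : ∀ k : Fin N, (fun i : Fin N => i + k) = ⇑(Equiv.addRight k) := by
    intro k; rw [Equiv.coe_addRight]
  have hNtop : (N : ℝ≥0∞)⁻¹ ≠ ⊤ := ENNReal.inv_ne_top.mpr (by exact_mod_cast hN.ne')
  -- integrated inequality
  have hineq : ∫⁻ ω, ENNReal.ofReal (∑ i : Fin N, c (ω₀ ω) (γt (v i ω))
        ((N:ℝ)⁻¹ • ∑ p : Fin N, γt (v p ω))) ∂P
      ≤ ∫⁻ ω, ENNReal.ofReal (F id ω) ∂P := by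
    calc ∫⁻ ω, ENNReal.ofReal (∑ i : Fin N, c (ω₀ ω) (γt (v i ω))
          ((N:ℝ)⁻¹ • ∑ p : Fin N, γt (v p ω))) ∂P
        ≤ ∫⁻ ω, (N : ℝ≥0∞)⁻¹ *
            ∑ k : Fin N, ENNReal.ofReal (F (fun i => i + k) ω) ∂P :=
          lintegral_mono_ae hpoint
      _ = (N : ℝ≥0∞)⁻¹ * ∑ k : Fin N,
            ∫⁻ ω, ENNReal.ofReal (F (fun i => i + k) ω) ∂P := by
          rw [lintegral_const_mul' _ _ hNtop,
            lintegral_finset_sum _ fun k _ => hF_meas _]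
      _ = (N : ℝ≥0∞)⁻¹ * ∑ _k : Fin N, ∫⁻ ω, ENNReal.ofReal (F id ω) ∂P := by
          congr 1
          refine Finset.sum_congr rfl fun k _ => ?_
          rw [cyc k]
          exact key_int (Equiv.addRight k)
      _ = ∫⁻ ω, ENNReal.ofReal (F id ω) ∂P := by
          rw [Finset.sum_const, Finset.card_univ, Fintype.card_fin, nsmul_eq_mul,
            ← mul_assoc, ENNReal.inv_mul_cancel (by exact_mod_cast hN.ne')
              (by simp), one_mul]
  refine ⟨γt, hγt_meas, hγt_U, ?_⟩
  have hid : (fun ω => ENNReal.ofReal (F id ω)) = fun ω => ENNReal.ofReal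
      (∑ i : Fin N, c (ω₀ ω) (γ i (v i ω))
        ((N:ℝ)⁻¹ • ∑ p : Fin N, γ p (v p ω))) := by
    simp [hF_def]
  unfold meanFieldCostTuple
  rw [← hid] at *
  exact mul_le_mul_right hineq _
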